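/- arXiv:2002.11318 — 3 statements merged into one kernel-verified Lean document; each statement's English description precedes it below -/
import Mathlib

section
/- Let (X, Y) be a random input-label pair where X takes values in ℝ^{2d+1} and Y in {-1,1}, distributed as follows: Y is uniform; X_0 | Y=y equals y with probability p and -y with probability 1-p; for 1 ≤ t ≤ d, X_{2t-1} | Y=y ~ N(3y/√d, 1) and X_{2t} | Y=y ~ N(-3y/√d, 1), all coordinates conditionally independent. Let A(x) be defined for inputs with true label y by (A(x))_0 = 0, (A(x))_{2t-1} = -6y/√d, (A(x))_{2t} = 6y/√d. Let r(x) be the random transformation that with probability 1/2 leaves x unchanged and with probability 1/2 swaps each odd-even coordinate pair (x_{2t-1}, x_{2t}). Then for any classifier f : ℝ^{2d+1} → {-1,1}: P(f(r(X)) = Y) = (1/2)·P(f(X) = Y) + (1/2)·P(f(X + A(X)) = Y). -/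
open MeasureTheory ProbabilityTheory ENNReal

/-- Law of X₀ given Y = y: equals y with probability p and -y with probability 1-p. -/
noncomputable def bern (p : ℝ) (y : ℝ) : MeasureTheory.Measure ℝ :=
  ENNReal.ofReal p • MeasureTheory.Measure.dirac y +
    ENNReal.ofReal (1 - p) • MeasureTheory.Measure.dirac (-y)

/-- Conditional law of X = (X₀, X₁, …, X_{2d}) given Y = y. -/
noncomputable def condLaw (d : ℕ) (p : ℝ) (y : ℝ) :
    MeasureTheory.Measure (Fin (2 * d + 1) → ℝ) :=
  MeasureTheory.Measure.pi (fun i =>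
    if i.val = 0 then bern p y
    else if i.val % 2 = 1 then ProbabilityTheory.gaussianReal (3 * y / Real.sqrt d) 1
    else ProbabilityTheory.gaussianReal (-3 * y / Real.sqrt d) 1)

/-- Joint law of (X, Y), with Y uniform on {-1, 1}. -/
noncomputable def jointLaw (d : ℕ) (p : ℝ) :
    MeasureTheory.Measure ((Fin (2 * d + 1) → ℝ) × ℝ) :=
  (2⁻¹ : ℝ≥0∞) • (condLaw d p 1).map (fun x => (x, (1 : ℝ))) +
    (2⁻¹ : ℝ≥0∞) • (condLaw d p (-1)).map (fun x => (x, (-1 : ℝ)))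

/-- The adversarial perturbation A(x) (depending only on the true label y). -/
noncomputable def pert (d : ℕ) (y : ℝ) : Fin (2 * d + 1) → ℝ := fun i =>
  if i.val = 0 then 0
  else if i.val % 2 = 1 then -6 * y / Real.sqrt d
  else 6 * y / Real.sqrt d

/-- The index permutation fixing 0 and swapping each pair (2t-1, 2t). -/
def swapIdx (d : ℕ) (i : Fin (2 * d + 1)) : Fin (2 * d + 1) :=
  if h0 : i.val = 0 then i
  else if h1 : i.val % 2 = 1 then ⟨i.val + 1, by have := i.isLt; omega⟩
  else ⟨i.val - 1, by have := i.isLt; omega⟩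

/-- The coordinate-pair swap on ℝ^{2d+1}. -/
def swapMap (d : ℕ) (x : Fin (2 * d + 1) → ℝ) : Fin (2 * d + 1) → ℝ :=
  fun i => x (swapIdx d i)

/-- Law of (X + A(X), Y). -/
noncomputable def advLaw (d : ℕ) (p : ℝ) :
    MeasureTheory.Measure ((Fin (2 * d + 1) → ℝ) × ℝ) :=
  (jointLaw d p).map (fun q => (q.1 + pert d q.2, q.2))

/-- Law of (r(X), Y): with prob 1/2 identity, with prob 1/2 the pair swap. -/
noncomputable def rLaw (d : ℕ) (p : ℝ) :
    MeasureTheory.Measure ((Fin (2 * d + 1) → ℝ) × ℝ) :=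
  (2⁻¹ : ℝ≥0∞) • jointLaw d p +
    (2⁻¹ : ℝ≥0∞) • (jointLaw d p).map (fun q => (swapMap d q.1, q.2))



noncomputable def condFam (d : ℕ) (p : ℝ) (y : ℝ) : Fin (2 * d + 1) → Measure ℝ := fun i =>
  if i.val = 0 then bern p y
  else if i.val % 2 = 1 then gaussianReal (3 * y / Real.sqrt d) 1
  else gaussianReal (-3 * y / Real.sqrt d) 1

noncomputable def swFam (d : ℕ) (p : ℝ) (y : ℝ) : Fin (2 * d + 1) → Measure ℝ := fun i =>
  if i.val = 0 then bern p y
  else if i.val % 2 = 1 then gaussianReal (-3 * y / Real.sqrt d) 1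
  else gaussianReal (3 * y / Real.sqrt d) 1

instance bern_finite (p y : ℝ) : IsFiniteMeasure (bern p y) := by
  constructor
  simp only [bern, Measure.add_apply, Measure.smul_apply, Measure.dirac_apply_of_mem
    (Set.mem_univ _), smul_eq_mul, mul_one]
  exact ENNReal.add_lt_top.2 ⟨ofReal_lt_top, ofReal_lt_top⟩

instance condFam_finite (d : ℕ) (p y : ℝ) (i : Fin (2 * d + 1)) :
    IsFiniteMeasure (condFam d p y i) := by
  unfold condFam; split_ifs <;> infer_instance

instance swFam_finite (d : ℕ) (p y : ℝ) (i : Fin (2 * d + 1)) :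
    IsFiniteMeasure (swFam d p y i) := by
  unfold swFam; split_ifs <;> infer_instance

lemma condLaw_eq (d : ℕ) (p y : ℝ) : condLaw d p y = Measure.pi (condFam d p y) := rfl

lemma swapIdx_val (d : ℕ) (i : Fin (2 * d + 1)) :
    (swapIdx d i).val = if i.val = 0 then i.val
      else if i.val % 2 = 1 then i.val + 1 else i.val - 1 := by
  simp only [swapIdx]
  split_ifs <;> rfl

lemma swapIdx_invol (d : ℕ) (i : Fin (2 * d + 1)) : swapIdx d (swapIdx d i) = i := by
  have hlt := i.isLt
  apply Fin.ext
  rw [swapIdx_val, swapIdx_val]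
  split_ifs <;> first | omega | simp_all

noncomputable def swapEquiv (d : ℕ) : Equiv.Perm (Fin (2 * d + 1)) :=
  Function.Involutive.toPerm (swapIdx d) (swapIdx_invol d)

lemma measurable_swapMap (d : ℕ) : Measurable (swapMap d) :=
  measurable_pi_lambda _ fun i => measurable_pi_apply _

lemma fam_swap (d : ℕ) (p y : ℝ) (j : Fin (2 * d + 1)) :
    condFam d p y (swapIdx d j) = swFam d p y j := by
  have hval := swapIdx_val d j
  unfold condFam swFam
  by_cases h0 : j.val = 0
  · have h : (swapIdx d j).val = 0 := by rw [hval]; simp [h0]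
    rw [if_pos h, if_pos h0]
  by_cases h1 : j.val % 2 = 1
  · rw [if_neg h0, if_pos h1] at hval
    rw [if_neg (by omega : ¬ (swapIdx d j).val = 0),
      if_neg (by omega : ¬ (swapIdx d j).val % 2 = 1), if_neg h0, if_pos h1]
  · rw [if_neg h0, if_neg h1] at hval
    rw [if_neg (by omega : ¬ (swapIdx d j).val = 0),
      if_pos (by omega : (swapIdx d j).val % 2 = 1), if_neg h0, if_neg h1]

lemma fam_shift (d : ℕ) (p y : ℝ) (i : Fin (2 * d + 1)) :
    (condFam d p y i).map (· + pert d y i) = swFam d p y i := by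
  rcases i with ⟨v, hv⟩
  simp only [condFam, swFam, pert]
  split_ifs with h0 h1
  · simp
  · rw [gaussianReal_map_add_const]
    congr 1
    ring
  · rw [gaussianReal_map_add_const]
    congr 1
    ring

lemma mapA (d : ℕ) (p y : ℝ) :
    (condLaw d p y).map (swapMap d) = Measure.pi (swFam d p y) := by
  refine (Measure.pi_eq fun s hs => ?_).symm
  rw [Measure.map_apply (measurable_swapMap d) (MeasurableSet.univ_pi hs)]
  have hpre : swapMap d ⁻¹' Set.pi Set.univ s = Set.pi Set.univ (fun j => s (swapIdx d j)) := by
    ext x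
    simp only [Set.mem_preimage, Set.mem_pi, Set.mem_univ, true_implies, swapMap]
    constructor
    · intro h j
      have := h (swapIdx d j)
      rwa [swapIdx_invol] at this
    · intro h i
      have := h (swapIdx d i)
      rwa [swapIdx_invol] at this
  rw [hpre, condLaw_eq, Measure.pi_pi]
  refine Fintype.prod_equiv (swapEquiv d) _ _ fun j => ?_
  show condFam d p y j (s (swapIdx d j)) = swFam d p y (swapIdx d j) (s (swapIdx d j))
  rw [← fam_swap d p y (swapIdx d j), swapIdx_invol]

lemma measurable_add_pert (d : ℕ) (y : ℝ) :
    Measurable (fun x : Fin (2 * d + 1) → ℝ => x + pert d y) :=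
  measurable_pi_lambda _ fun i => (measurable_pi_apply i).add_const _

lemma mapB (d : ℕ) (p y : ℝ) :
    (condLaw d p y).map (fun x => x + pert d y) = Measure.pi (swFam d p y) := by
  refine (Measure.pi_eq fun s hs => ?_).symm
  rw [Measure.map_apply (measurable_add_pert d y) (MeasurableSet.univ_pi hs)]
  have hpre : (fun x : Fin (2 * d + 1) → ℝ => x + pert d y) ⁻¹' Set.pi Set.univ s
      = Set.pi Set.univ (fun i => (· + pert d y i) ⁻¹' s i) := by
    ext x
    simp [Set.mem_pi, Pi.add_apply]
  rw [hpre, condLaw_eq, Measure.pi_pi]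
  refine Finset.prod_congr rfl fun i _ => ?_
  rw [← fam_shift d p y i,
    Measure.map_apply (measurable_add_const _) (hs i)]

lemma keyLemma (d : ℕ) (p y : ℝ) :
    (condLaw d p y).map (swapMap d) = (condLaw d p y).map (fun x => x + pert d y) :=
  (mapA d p y).trans (mapB d p y).symm

lemma measurable_pairSwap (d : ℕ) :
    Measurable (fun q : (Fin (2 * d + 1) → ℝ) × ℝ => (swapMap d q.1, q.2)) :=
  ((measurable_swapMap d).comp measurable_fst).prodMk measurable_snd

lemma measurable_pairAdv (d : ℕ) :
    Measurable (fun q : (Fin (2 * d + 1) → ℝ) × ℝ => (q.1 + pert d q.2, q.2)) := by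
  refine Measurable.prodMk ?_ measurable_snd
  refine measurable_pi_lambda _ fun i => ?_
  have h1 : Measurable fun q : (Fin (2 * d + 1) → ℝ) × ℝ => pert d q.2 i := by
    unfold pert
    split_ifs <;> fun_prop
  exact ((measurable_pi_apply i).comp measurable_fst).add h1

lemma mapJoint (d : ℕ) (p : ℝ) :
    (jointLaw d p).map (fun q => (swapMap d q.1, q.2)) = advLaw d p := by
  unfold advLaw jointLaw
  have hx1 : Measurable (fun x : Fin (2 * d + 1) → ℝ => (x, (1 : ℝ))) :=
    measurable_id.prodMk measurable_const
  have hx2 : Measurable (fun x : Fin (2 * d + 1) → ℝ => (x, (-1 : ℝ))) :=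
    measurable_id.prodMk measurable_const
  rw [Measure.map_add _ _ (measurable_pairSwap d), Measure.map_add _ _ (measurable_pairAdv d),
    Measure.map_smul, Measure.map_smul, Measure.map_smul, Measure.map_smul,
    Measure.map_map (measurable_pairSwap d) hx1, Measure.map_map (measurable_pairSwap d) hx2,
    Measure.map_map (measurable_pairAdv d) hx1, Measure.map_map (measurable_pairAdv d) hx2]
  have e1 : ((fun q : (Fin (2 * d + 1) → ℝ) × ℝ => (swapMap d q.1, q.2)) ∘
      (fun x => (x, (1 : ℝ)))) = (fun x => (x, (1 : ℝ))) ∘ swapMap d := rfl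
  have e2 : ((fun q : (Fin (2 * d + 1) → ℝ) × ℝ => (swapMap d q.1, q.2)) ∘
      (fun x => (x, (-1 : ℝ)))) = (fun x => (x, (-1 : ℝ))) ∘ swapMap d := rfl
  have e3 : ((fun q : (Fin (2 * d + 1) → ℝ) × ℝ => (q.1 + pert d q.2, q.2)) ∘
      (fun x => (x, (1 : ℝ)))) = (fun x => (x, (1 : ℝ))) ∘ (fun x => x + pert d 1) := rfl
  have e4 : ((fun q : (Fin (2 * d + 1) → ℝ) × ℝ => (q.1 + pert d q.2, q.2)) ∘
      (fun x => (x, (-1 : ℝ)))) = (fun x => (x, (-1 : ℝ))) ∘ (fun x => x + pert d (-1)) := rfl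
  rw [e1, e2, e3, e4,
    ← Measure.map_map hx1 (measurable_swapMap d),
    ← Measure.map_map hx2 (measurable_swapMap d),
    ← Measure.map_map hx1 (measurable_add_pert d 1),
    ← Measure.map_map hx2 (measurable_add_pert d (-1)),
    keyLemma d p 1, keyLemma d p (-1)]

/-- P(f(r(X)) = Y) = ½·P(f(X) = Y) + ½·P(f(X + A(X)) = Y) for any classifier f. -/
theorem rotation_accuracy_split (d : ℕ) (hd : 1 ≤ d) (p : ℝ)
    (hp0 : 1/2 ≤ p) (hp1 : p ≤ 1)
    (f : (Fin (2 * d + 1) → ℝ) → ℝ) (hf : Measurable f)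
    (hfval : ∀ x, f x = 1 ∨ f x = -1) :
    rLaw d p {q | f q.1 = q.2} =
      2⁻¹ * jointLaw d p {q | f q.1 = q.2} + 2⁻¹ * advLaw d p {q | f q.1 = q.2} := by
  unfold rLaw
  rw [mapJoint]
  simp [Measure.add_apply, Measure.smul_apply, smul_eq_mul]
end

section
/- With the distribution of Theorem setup (Y uniform on {-1,1}; X_0 | Y=y equal to y with probability p ≥ 1/2 and -y otherwise; X_{2t-1}|Y=y ~ N(3y/√d,1), X_{2t}|Y=y ~ N(-3y/√d,1) independent; adversarial perturbation A flipping the Gaussian block means as defined), for any classifier f : ℝ^{2d+1} → {-1,1}: P(f(X + A(X)) ≠ Y) ≥ ((1-p)/p) · P(f(X) = Y). -/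
open MeasureTheory ProbabilityTheory ENNReal

/-! ### Auxiliary definitions and lemmas -/

lemma bern_prob {p : ℝ} (h0 : 0 ≤ p) (h1 : p ≤ 1) (y : ℝ) :
    IsProbabilityMeasure (bern p y) := by
  constructor
  simp only [bern, Measure.add_apply, Measure.smul_apply, smul_eq_mul,
    MeasureTheory.measure_univ, mul_one]
  rw [← ENNReal.ofReal_add h0 (by linarith)]
  norm_num

/-- Conditional law of X + A(X) given Y = y. -/
noncomputable def advCond (d : ℕ) (p : ℝ) (y : ℝ) :
    MeasureTheory.Measure (Fin (2 * d + 1) → ℝ) :=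
  MeasureTheory.Measure.pi (fun i =>
    if i.val = 0 then bern p y
    else if i.val % 2 = 1 then ProbabilityTheory.gaussianReal (-3 * y / Real.sqrt d) 1
    else ProbabilityTheory.gaussianReal (3 * y / Real.sqrt d) 1)

/-- Auxiliary measure: like advCond but with a Dirac mass at coordinate 0. -/
noncomputable def diracCond (d : ℕ) (p : ℝ) (y : ℝ) :
    MeasureTheory.Measure (Fin (2 * d + 1) → ℝ) :=
  MeasureTheory.Measure.pi (fun i =>
    if i.val = 0 then MeasureTheory.Measure.dirac y
    else if i.val % 2 = 1 then ProbabilityTheory.gaussianReal (-3 * y / Real.sqrt d) 1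
    else ProbabilityTheory.gaussianReal (3 * y / Real.sqrt d) 1)

lemma bern_decomp {p : ℝ} (hp0 : 1/2 ≤ p) (hp1 : p ≤ 1) (y : ℝ) :
    bern p y = ENNReal.ofReal ((1 - p) / p) • bern p (-y)
      + ENNReal.ofReal ((2 * p - 1) / p) • MeasureTheory.Measure.dirac y := by
  have hp : (0 : ℝ) < p := by linarith
  have hc : (0 : ℝ) ≤ (1 - p) / p := div_nonneg (by linarith) hp.le
  have h1 : ENNReal.ofReal ((1 - p) / p) * ENNReal.ofReal p = ENNReal.ofReal (1 - p) := by
    rw [← ENNReal.ofReal_mul hc, div_mul_cancel₀ _ hp.ne']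
  have h2 : ENNReal.ofReal ((1 - p) / p) * ENNReal.ofReal (1 - p)
      + ENNReal.ofReal ((2 * p - 1) / p) = ENNReal.ofReal p := by
    rw [← ENNReal.ofReal_mul hc,
      ← ENNReal.ofReal_add (mul_nonneg hc (by linarith)) (div_nonneg (by linarith) hp.le)]
    congr 1
    field_simp
    ring
  ext s hs
  simp only [bern, Measure.add_apply, Measure.smul_apply, smul_eq_mul, neg_neg]
  set a := (Measure.dirac y) s
  set b := (Measure.dirac (-y)) s
  set c := ENNReal.ofReal ((1 - p) / p)
  set r := ENNReal.ofReal ((2 * p - 1) / p)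
  calc ENNReal.ofReal p * a + ENNReal.ofReal (1 - p) * b
      = (c * ENNReal.ofReal (1 - p) + r) * a + (c * ENNReal.ofReal p) * b := by
        rw [h1, h2]
    _ = c * (ENNReal.ofReal p * b + ENNReal.ofReal (1 - p) * a) + r * a := by ring

lemma condLaw_map_pert (d : ℕ) {p : ℝ} (h0 : 0 ≤ p) (h1 : p ≤ 1) (y : ℝ) :
    (condLaw d p y).map (· + pert d y) = advCond d p y := by
  haveI hb : ∀ z : ℝ, IsProbabilityMeasure (bern p z) := fun z => bern_prob h0 h1 z
  haveI : ∀ i : Fin (2 * d + 1), SigmaFinite ((fun i : Fin (2 * d + 1) =>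
      if i.val = 0 then bern p y
      else if i.val % 2 = 1 then ProbabilityTheory.gaussianReal (-3 * y / Real.sqrt d) 1
      else ProbabilityTheory.gaussianReal (3 * y / Real.sqrt d) 1) i) := by
    intro i; dsimp only; split_ifs <;> infer_instance
  have h := MeasureTheory.measurePreserving_pi
    (fun i : Fin (2 * d + 1) =>
      if i.val = 0 then bern p y
      else if i.val % 2 = 1 then ProbabilityTheory.gaussianReal (3 * y / Real.sqrt d) 1
      else ProbabilityTheory.gaussianReal (-3 * y / Real.sqrt d) 1)
    (fun i : Fin (2 * d + 1) =>
      if i.val = 0 then bern p y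
      else if i.val % 2 = 1 then ProbabilityTheory.gaussianReal (-3 * y / Real.sqrt d) 1
      else ProbabilityTheory.gaussianReal (3 * y / Real.sqrt d) 1)
    (f := fun i x => x + pert d y i) ?_
  · exact h.map_eq
  · intro i
    refine ⟨measurable_add_const _, ?_⟩
    by_cases hi0 : i.val = 0
    · have hp0 : pert d y i = 0 := by simp [pert, hi0]
      simp only [hp0, add_zero, if_pos hi0]
      exact Measure.map_id
    · by_cases hi1 : i.val % 2 = 1
      · have hp0 : pert d y i = -6 * y / Real.sqrt d := by simp [pert, hi0, hi1]
        simp only [hp0, if_neg hi0, if_pos hi1]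
        rw [ProbabilityTheory.gaussianReal_map_add_const]
        congr 1
        ring
      · have hp0 : pert d y i = 6 * y / Real.sqrt d := by simp [pert, hi0, hi1]
        simp only [hp0, if_neg hi0, if_neg hi1]
        rw [ProbabilityTheory.gaussianReal_map_add_const]
        congr 1
        ring

lemma advCond_decomp (d : ℕ) {p : ℝ} (hp0 : 1/2 ≤ p) (hp1 : p ≤ 1) (y : ℝ) :
    advCond d p y = ENNReal.ofReal ((1 - p) / p) • condLaw d p (-y)
      + ENNReal.ofReal ((2 * p - 1) / p) • diracCond d p y := by
  have h0 : (0 : ℝ) ≤ p := by linarith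
  haveI hb : ∀ z : ℝ, IsProbabilityMeasure (bern p z) := fun z => bern_prob h0 hp1 z
  haveI : ∀ i : Fin (2 * d + 1), SigmaFinite ((fun i : Fin (2 * d + 1) =>
      if i.val = 0 then bern p (-y)
      else if i.val % 2 = 1 then ProbabilityTheory.gaussianReal (3 * (-y) / Real.sqrt d) 1
      else ProbabilityTheory.gaussianReal (-3 * (-y) / Real.sqrt d) 1) i) := by
    intro i; dsimp only; split_ifs <;> infer_instance
  haveI : ∀ i : Fin (2 * d + 1), SigmaFinite ((fun i : Fin (2 * d + 1) =>
      if i.val = 0 then MeasureTheory.Measure.dirac y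
      else if i.val % 2 = 1 then ProbabilityTheory.gaussianReal (-3 * y / Real.sqrt d) 1
      else ProbabilityTheory.gaussianReal (3 * y / Real.sqrt d) 1) i) := by
    intro i; dsimp only; split_ifs <;> infer_instance
  haveI : ∀ i : Fin (2 * d + 1), SigmaFinite ((fun i : Fin (2 * d + 1) =>
      if i.val = 0 then bern p y
      else if i.val % 2 = 1 then ProbabilityTheory.gaussianReal (-3 * y / Real.sqrt d) 1
      else ProbabilityTheory.gaussianReal (3 * y / Real.sqrt d) 1) i) := by
    intro i; dsimp only; split_ifs <;> infer_instance
  refine Measure.pi_eq fun s hs => ?_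
  rw [Measure.add_apply, Measure.smul_apply, Measure.smul_apply, smul_eq_mul, smul_eq_mul]
  simp only [condLaw, diracCond]
  rw [Measure.pi_pi, Measure.pi_pi]
  have hz : (⟨0, by omega⟩ : Fin (2 * d + 1)) ∈ Finset.univ := Finset.mem_univ _
  rw [← Finset.mul_prod_erase _ _ hz, ← Finset.mul_prod_erase _ _ hz,
    ← Finset.mul_prod_erase _ _ hz]
  have hne : ∀ i ∈ Finset.univ.erase (⟨0, by omega⟩ : Fin (2 * d + 1)), i.val ≠ 0 := by
    intro i hi h
    exact (Finset.ne_of_mem_erase hi) (Fin.ext h)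
  have hcond : ∀ i ∈ Finset.univ.erase (⟨0, by omega⟩ : Fin (2 * d + 1)),
      (if i.val = 0 then bern p (-y)
        else if i.val % 2 = 1 then ProbabilityTheory.gaussianReal (3 * (-y) / Real.sqrt d) 1
        else ProbabilityTheory.gaussianReal (-3 * (-y) / Real.sqrt d) 1) (s i)
      = (if i.val = 0 then bern p y
        else if i.val % 2 = 1 then ProbabilityTheory.gaussianReal (-3 * y / Real.sqrt d) 1
        else ProbabilityTheory.gaussianReal (3 * y / Real.sqrt d) 1) (s i) := by
    intro i hi
    rw [if_neg (hne i hi), if_neg (hne i hi)]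
    by_cases h2 : i.val % 2 = 1
    · rw [if_pos h2, if_pos h2]
      have : 3 * (-y) / Real.sqrt d = -3 * y / Real.sqrt d := by ring
      rw [this]
    · rw [if_neg h2, if_neg h2]
      have : -3 * (-y) / Real.sqrt d = 3 * y / Real.sqrt d := by ring
      rw [this]
  have hdir : ∀ i ∈ Finset.univ.erase (⟨0, by omega⟩ : Fin (2 * d + 1)),
      (if i.val = 0 then MeasureTheory.Measure.dirac y
        else if i.val % 2 = 1 then ProbabilityTheory.gaussianReal (-3 * y / Real.sqrt d) 1
        else ProbabilityTheory.gaussianReal (3 * y / Real.sqrt d) 1) (s i)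
      = (if i.val = 0 then bern p y
        else if i.val % 2 = 1 then ProbabilityTheory.gaussianReal (-3 * y / Real.sqrt d) 1
        else ProbabilityTheory.gaussianReal (3 * y / Real.sqrt d) 1) (s i) := by
    intro i hi
    rw [if_neg (hne i hi), if_neg (hne i hi)]
  rw [Finset.prod_congr rfl hcond, Finset.prod_congr rfl hdir]
  have e0 : ((⟨0, by omega⟩ : Fin (2 * d + 1)) : ℕ) = 0 := rfl
  rw [if_pos e0, if_pos e0, if_pos e0, bern_decomp hp0 hp1 y, Measure.add_apply,
    Measure.smul_apply, Measure.smul_apply, smul_eq_mul, smul_eq_mul]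
  ring

lemma advCond_ge (d : ℕ) {p : ℝ} (hp0 : 1/2 ≤ p) (hp1 : p ≤ 1) (y : ℝ)
    (s : Set (Fin (2 * d + 1) → ℝ)) :
    ENNReal.ofReal ((1 - p) / p) * condLaw d p (-y) s ≤ advCond d p y s := by
  rw [advCond_decomp d hp0 hp1 y, Measure.add_apply, Measure.smul_apply, smul_eq_mul]
  exact le_self_add

lemma condLaw_isProb (d : ℕ) {p : ℝ} (h0 : 0 ≤ p) (h1 : p ≤ 1) (y : ℝ) :
    IsProbabilityMeasure (condLaw d p y) := by
  haveI hb : IsProbabilityMeasure (bern p y) := bern_prob h0 h1 y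
  haveI : ∀ i : Fin (2 * d + 1), IsProbabilityMeasure ((fun i : Fin (2 * d + 1) =>
      if i.val = 0 then bern p y
      else if i.val % 2 = 1 then ProbabilityTheory.gaussianReal (3 * y / Real.sqrt d) 1
      else ProbabilityTheory.gaussianReal (-3 * y / Real.sqrt d) 1) i) := by
    intro i; dsimp only; split_ifs <;> infer_instance
  rw [condLaw]
  infer_instance

lemma advCond_isProb (d : ℕ) {p : ℝ} (h0 : 0 ≤ p) (h1 : p ≤ 1) (y : ℝ) :
    IsProbabilityMeasure (advCond d p y) := by
  haveI hb : IsProbabilityMeasure (bern p y) := bern_prob h0 h1 y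
  haveI : ∀ i : Fin (2 * d + 1), IsProbabilityMeasure ((fun i : Fin (2 * d + 1) =>
      if i.val = 0 then bern p y
      else if i.val % 2 = 1 then ProbabilityTheory.gaussianReal (-3 * y / Real.sqrt d) 1
      else ProbabilityTheory.gaussianReal (3 * y / Real.sqrt d) 1) i) := by
    intro i; dsimp only; split_ifs <;> infer_instance
  rw [advCond]
  infer_instance


/-- Adversarial error is at least ((1-p)/p) times the clean accuracy:
P(f(X + A(X)) ≠ Y) ≥ ((1-p)/p) · P(f(X) = Y). -/
theorem adversarial_error_lower_bound (d : ℕ) (hd : 1 ≤ d) (p : ℝ)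
    (hp0 : 1/2 ≤ p) (hp1 : p ≤ 1)
    (f : (Fin (2 * d + 1) → ℝ) → ℝ) (hf : Measurable f)
    (hfval : ∀ x, f x = 1 ∨ f x = -1) :
    ((1 - p) / p) * (jointLaw d p {q | f q.1 = q.2}).toReal ≤
      (advLaw d p {q | f q.1 ≠ q.2}).toReal := by
  classical
  have hp : (0 : ℝ) < p := by linarith
  have h0 : (0 : ℝ) ≤ p := hp.le
  have hc0 : (0 : ℝ) ≤ (1 - p) / p := div_nonneg (by linarith) h0
  set c := ENNReal.ofReal ((1 - p) / p) with hc
  -- measurability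
  have hpert : Measurable (fun y : ℝ => pert d y) := by
    apply measurable_pi_lambda
    intro i
    unfold pert
    split_ifs <;> fun_prop
  have hg : Measurable (fun q : (Fin (2 * d + 1) → ℝ) × ℝ => (q.1 + pert d q.2, q.2)) :=
    (measurable_fst.add (hpert.comp measurable_snd)).prodMk measurable_snd
  have hSeq : MeasurableSet {q : (Fin (2 * d + 1) → ℝ) × ℝ | f q.1 = q.2} :=
    measurableSet_eq_fun (hf.comp measurable_fst) measurable_snd
  have hSne : MeasurableSet {q : (Fin (2 * d + 1) → ℝ) × ℝ | f q.1 ≠ q.2} := by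
    have : {q : (Fin (2 * d + 1) → ℝ) × ℝ | f q.1 ≠ q.2}
        = {q : (Fin (2 * d + 1) → ℝ) × ℝ | f q.1 = q.2}ᶜ := rfl
    rw [this]; exact hSeq.compl
  have hm1 : MeasurableSet {x : Fin (2 * d + 1) → ℝ | f x = 1} :=
    hf (measurableSet_singleton 1)
  have hmn1 : MeasurableSet {x : Fin (2 * d + 1) → ℝ | f x = -1} :=
    hf (measurableSet_singleton (-1))
  -- clean accuracy
  have hJ : jointLaw d p {q | f q.1 = q.2}
      = 2⁻¹ * condLaw d p 1 {x | f x = 1} + 2⁻¹ * condLaw d p (-1) {x | f x = -1} := by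
    rw [jointLaw, Measure.add_apply, Measure.smul_apply, Measure.smul_apply,
      Measure.map_apply measurable_prodMk_right hSeq,
      Measure.map_apply measurable_prodMk_right hSeq]
    rfl
  -- adversarial error
  have hA : advLaw d p {q | f q.1 ≠ q.2}
      = 2⁻¹ * advCond d p 1 {x | f x = -1} + 2⁻¹ * advCond d p (-1) {x | f x = 1} := by
    rw [advLaw, Measure.map_apply hg hSne, jointLaw, Measure.add_apply,
      Measure.smul_apply, Measure.smul_apply,
      Measure.map_apply measurable_prodMk_right (hg hSne),
      Measure.map_apply measurable_prodMk_right (hg hSne)]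
    have he1 : ((fun x : Fin (2 * d + 1) → ℝ => (x, (1 : ℝ))) ⁻¹'
        ((fun q : (Fin (2 * d + 1) → ℝ) × ℝ => (q.1 + pert d q.2, q.2)) ⁻¹'
          {q | f q.1 ≠ q.2}))
        = (· + pert d 1) ⁻¹' {x | f x = -1} := by
      ext x
      simp only [Set.mem_preimage, Set.mem_setOf_eq]
      constructor
      · intro h
        rcases hfval (x + pert d 1) with h' | h'
        · exact absurd h' h
        · exact h'
      · intro h h'
        rw [h] at h'
        norm_num at h'
    have he2 : ((fun x : Fin (2 * d + 1) → ℝ => (x, (-1 : ℝ))) ⁻¹'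
        ((fun q : (Fin (2 * d + 1) → ℝ) × ℝ => (q.1 + pert d q.2, q.2)) ⁻¹'
          {q | f q.1 ≠ q.2}))
        = (· + pert d (-1)) ⁻¹' {x | f x = 1} := by
      ext x
      simp only [Set.mem_preimage, Set.mem_setOf_eq]
      constructor
      · intro h
        rcases hfval (x + pert d (-1)) with h' | h'
        · exact h'
        · exact absurd h' h
      · intro h h'
        rw [h] at h'
        norm_num at h'
    rw [he1, he2,
      ← Measure.map_apply (measurable_add_const _) hmn1,
      ← Measure.map_apply (measurable_add_const _) hm1,
      condLaw_map_pert d h0 hp1 1, condLaw_map_pert d h0 hp1 (-1)]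
    simp only [smul_eq_mul]
  -- the key comparison
  have key : c * jointLaw d p {q | f q.1 = q.2} ≤ advLaw d p {q | f q.1 ≠ q.2} := by
    rw [hJ, hA, mul_add]
    have k1 : c * (2⁻¹ * condLaw d p 1 {x | f x = 1})
        ≤ 2⁻¹ * advCond d p (-1) {x | f x = 1} := by
      rw [← mul_assoc, mul_comm c 2⁻¹, mul_assoc]
      refine mul_le_mul_right ?_ _
      have := advCond_ge d hp0 hp1 (-1) {x | f x = 1}
      rwa [neg_neg] at this
    have k2 : c * (2⁻¹ * condLaw d p (-1) {x | f x = -1})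
        ≤ 2⁻¹ * advCond d p 1 {x | f x = -1} := by
      rw [← mul_assoc, mul_comm c 2⁻¹, mul_assoc]
      refine mul_le_mul_right ?_ _
      exact advCond_ge d hp0 hp1 1 {x | f x = -1}
    calc c * (2⁻¹ * condLaw d p 1 {x | f x = 1})
          + c * (2⁻¹ * condLaw d p (-1) {x | f x = -1})
        ≤ 2⁻¹ * advCond d p (-1) {x | f x = 1}
          + 2⁻¹ * advCond d p 1 {x | f x = -1} := add_le_add k1 k2
      _ = 2⁻¹ * advCond d p 1 {x | f x = -1}
          + 2⁻¹ * advCond d p (-1) {x | f x = 1} := by ring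
  -- finiteness
  haveI := advCond_isProb d h0 hp1 1
  haveI := advCond_isProb d h0 hp1 (-1)
  have hfin : advLaw d p {q | f q.1 ≠ q.2} ≠ ⊤ := by
    rw [hA]
    exact ENNReal.add_ne_top.2
      ⟨ENNReal.mul_ne_top (by norm_num) (measure_ne_top _ _),
       ENNReal.mul_ne_top (by norm_num) (measure_ne_top _ _)⟩
  -- conclude via toReal
  calc ((1 - p) / p) * (jointLaw d p {q | f q.1 = q.2}).toReal
      = (c * jointLaw d p {q | f q.1 = q.2}).toReal := by
        rw [ENNReal.toReal_mul, hc, ENNReal.toReal_ofReal hc0]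
    _ ≤ (advLaw d p {q | f q.1 ≠ q.2}).toReal := ENNReal.toReal_mono hfin key
end

section
/- Under the trade-off theorem's distribution with 1/2 ≤ p < 1 - δ, for any classifier f : ℝ^{2d+1} → {-1,1}, if the adversarial accuracy P(f(X + A(X)) = Y) ≥ 1 - δ, then the randomized-rotation accuracy satisfies P(f(r(X)) = Y) ≤ p/(2(1-p)) - ((2p-1)/(2(1-p)))·(1-δ); in particular it is strictly less than 1 - δ. -/
open MeasureTheory ProbabilityTheory ENNReal

/- ### Auxiliary machinery -/

noncomputable def fam (d : ℕ) (s t : ℝ) : Fin (2 * d + 1) → Measure ℝ := fun i =>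
  if i.val = 0 then Measure.dirac s
  else if i.val % 2 = 1 then gaussianReal (3 * t / Real.sqrt d) 1
  else gaussianReal (-3 * t / Real.sqrt d) 1

instance (d : ℕ) (s t : ℝ) (i : Fin (2 * d + 1)) : IsProbabilityMeasure (fam d s t i) := by
  unfold fam; split_ifs <;> infer_instance

noncomputable def pureLaw (d : ℕ) (s t : ℝ) : Measure (Fin (2 * d + 1) → ℝ) :=
  Measure.pi (fam d s t)

instance (d : ℕ) (s t : ℝ) : IsProbabilityMeasure (pureLaw d s t) := by
  unfold pureLaw; infer_instance

instance (p y : ℝ) : IsFiniteMeasure (bern p y) := by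
  constructor
  simp [bern, Measure.add_apply, lt_top_iff_ne_top]

lemma condLaw_eq_s16 (d : ℕ) (p y : ℝ) :
    condLaw d p y = ENNReal.ofReal p • pureLaw d y y + ENNReal.ofReal (1 - p) • pureLaw d (-y) y := by
  unfold condLaw
  haveI : ∀ i : Fin (2 * d + 1), SigmaFinite ((fun i : Fin (2 * d + 1) =>
      if i.val = 0 then bern p y
      else if i.val % 2 = 1 then gaussianReal (3 * y / Real.sqrt d) 1
      else gaussianReal (-3 * y / Real.sqrt d) 1) i) := by
    intro i; dsimp only; split_ifs <;> infer_instance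
  refine Measure.pi_eq fun A hA => ?_
  simp only [Measure.add_apply, Measure.smul_apply, smul_eq_mul, pureLaw, Measure.pi_pi]
  rw [Fin.prod_univ_succ, Fin.prod_univ_succ, Fin.prod_univ_succ]
  have hsucc : ∀ (a : ℝ) (i : Fin (2 * d)), fam d a y i.succ (A i.succ)
      = (if (i.succ : Fin (2*d+1)).val = 0 then bern p y
        else if (i.succ : Fin (2*d+1)).val % 2 = 1 then gaussianReal (3 * y / Real.sqrt d) 1
        else gaussianReal (-3 * y / Real.sqrt d) 1) (A i.succ) := by
    intro a i
    have : (i.succ : Fin (2*d+1)).val ≠ 0 := by simp [Fin.val_succ]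
    simp only [fam, this, if_false]
  rw [Finset.prod_congr rfl fun i _ => hsucc y i, Finset.prod_congr rfl fun i _ => hsucc (-y) i]
  have h0 : ((0 : Fin (2*d+1)).val = 0) := rfl
  simp only [fam, h0, if_pos, if_true]
  have hb : bern p y (A 0) = ENNReal.ofReal p * Measure.dirac y (A 0)
      + ENNReal.ofReal (1-p) * Measure.dirac (-y) (A 0) := by
    simp [bern]
  rw [hb]; ring

lemma fam_map_shift (d : ℕ) (s t : ℝ) (i : Fin (2 * d + 1)) :
    (fam d s t i).map (· + pert d t i) = fam d s (-t) i := by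
  by_cases h0 : i.val = 0
  · simp only [fam, pert, h0, if_pos, if_true]
    rw [show (fun x : ℝ => x + (0:ℝ)) = id from funext fun x => add_zero x, Measure.map_id]
  by_cases h1 : i.val % 2 = 1
  · simp only [fam, pert, h0, h1, if_false, if_true, if_neg, if_pos]
    rw [gaussianReal_map_add_const]
    congr 1
    ring
  · simp only [fam, pert, h0, h1, if_false, if_neg]
    rw [gaussianReal_map_add_const]
    congr 1
    ring

lemma pureLaw_map_shift (d : ℕ) (s t : ℝ) :
    (pureLaw d s t).map (fun x => x + pert d t) = pureLaw d s (-t) := by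
  have hm : Measurable (fun x : Fin (2*d+1) → ℝ => x + pert d t) :=
    measurable_pi_lambda _ fun a => (measurable_pi_apply a).add_const _
  refine (Measure.pi_eq fun A hA => ?_).symm
  rw [Measure.map_apply hm (MeasurableSet.univ_pi hA)]
  have hpre : (fun x : Fin (2*d+1) → ℝ => x + pert d t) ⁻¹' (Set.pi Set.univ A)
      = Set.pi Set.univ (fun i => (· + pert d t i) ⁻¹' A i) := by
    ext x; simp [Set.mem_pi]
  rw [hpre, pureLaw, Measure.pi_pi]
  refine Finset.prod_congr rfl fun i _ => ?_
  rw [← fam_map_shift d s t i, Measure.map_apply (measurable_add_const _) (hA i)]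

lemma swapIdx_invol_s16 (d : ℕ) : Function.Involutive (swapIdx d) := by
  intro i
  by_cases h0 : i.val = 0
  · simp [swapIdx, h0]
  by_cases h1 : i.val % 2 = 1
  · have ha : i.val + 1 ≠ 0 := by omega
    have hb : ¬((i.val + 1) % 2 = 1) := by omega
    apply Fin.ext
    simp [swapIdx, h0, h1, ha, hb]
  · have ha : ¬(i.val - 1 = 0) := by omega
    have hb : (i.val - 1) % 2 = 1 := by omega
    apply Fin.ext
    simp [swapIdx, h0, h1, ha, hb]
    omega

lemma fam_swapIdx (d : ℕ) (s t : ℝ) (i : Fin (2 * d + 1)) :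
    fam d s t (swapIdx d i) = fam d s (-t) i := by
  by_cases h0 : i.val = 0
  · simp [swapIdx, fam, h0]
  by_cases h1 : i.val % 2 = 1
  · have hv : (swapIdx d i).val = i.val + 1 := by simp [swapIdx, h0, h1]
    have ha : i.val + 1 ≠ 0 := by omega
    have hb : ¬((i.val + 1) % 2 = 1) := by omega
    simp only [fam, hv, ha, hb, h0, h1, if_false, if_true, if_neg, if_pos]
    congr 1; ring
  · have hv : (swapIdx d i).val = i.val - 1 := by simp [swapIdx, h0, h1]
    have ha : ¬(i.val - 1 = 0) := by omega
    have hb : (i.val - 1) % 2 = 1 := by omega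
    simp only [fam, hv, ha, hb, h0, h1, if_false, if_true, if_neg, if_pos]
    congr 1; ring

lemma pureLaw_map_swap (d : ℕ) (s t : ℝ) :
    (pureLaw d s t).map (swapMap d) = pureLaw d s (-t) := by
  refine (Measure.pi_eq fun A hA => ?_).symm
  rw [Measure.map_apply (measurable_swapMap d) (MeasurableSet.univ_pi hA)]
  have hpre : swapMap d ⁻¹' (Set.pi Set.univ A)
      = Set.pi Set.univ (fun j => A (swapIdx d j)) := by
    ext x
    simp only [Set.mem_preimage, Set.mem_pi, Set.mem_univ, forall_true_left, swapMap,
      true_implies]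
    constructor
    · intro h j
      have := h (swapIdx d j)
      rwa [swapIdx_invol_s16 d j] at this
    · intro h i
      have := h (swapIdx d i)
      rwa [swapIdx_invol_s16 d i] at this
  rw [hpre, pureLaw, Measure.pi_pi]
  refine Fintype.prod_equiv (Function.Involutive.toPerm _ (swapIdx_invol_s16 d)) _ _ fun i => ?_
  show fam d s t i (A (swapIdx d i)) = fam d s (-t) (swapIdx d i) (A (swapIdx d i))
  rw [← fam_swapIdx d s t (swapIdx d i), swapIdx_invol_s16 d i]

set_option maxHeartbeats 1000000 in
/-- Quantitative trade-off: if the adversarial accuracy is at least 1 - δ and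
1/2 ≤ p < 1 - δ, then the randomized-rotation accuracy is at most
p/(2(1-p)) - ((2p-1)/(2(1-p)))·(1-δ), which is strictly less than 1 - δ. -/
theorem quantitative_tradeoff (d : ℕ) (hd : 1 ≤ d) (p δ : ℝ)
    (hp0 : 1/2 ≤ p) (hδ0 : 0 < δ) (hδ1 : δ ≤ 1/2) (hpδ : p < 1 - δ)
    (f : (Fin (2 * d + 1) → ℝ) → ℝ) (hf : Measurable f)
    (hfval : ∀ x, f x = 1 ∨ f x = -1)
    (hadv : 1 - δ ≤ (advLaw d p {q | f q.1 = q.2}).toReal) :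
    (rLaw d p {q | f q.1 = q.2}).toReal ≤
        p / (2 * (1 - p)) - ((2 * p - 1) / (2 * (1 - p))) * (1 - δ) ∧
      (rLaw d p {q | f q.1 = q.2}).toReal < 1 - δ := by
  have hp0' : (0:ℝ) ≤ p := by linarith
  have hp1' : (0:ℝ) ≤ 1 - p := by linarith
  have h1p : (0:ℝ) < 1 - p := by linarith
  set E : Set ((Fin (2*d+1) → ℝ) × ℝ) := {q | f q.1 = q.2} with hEdef
  have hE : MeasurableSet E := measurableSet_eq_fun (hf.comp measurable_fst) measurable_snd
  have hmeasv : ∀ v : ℝ, MeasurableSet {x : Fin (2*d+1) → ℝ | f x = v} :=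
    fun v => hf (measurableSet_singleton v)
  have hpair : ∀ c : ℝ, Measurable (fun x : Fin (2*d+1) → ℝ => (x, c)) :=
    fun c => measurable_id.prodMk measurable_const
  have hshiftm : ∀ y : ℝ, Measurable (fun x : Fin (2*d+1) → ℝ => x + pert d y) :=
    fun y => measurable_pi_lambda _ fun a => (measurable_pi_apply a).add_const _
  have hpertm : ∀ i : Fin (2*d+1), Measurable fun q : (Fin (2*d+1) → ℝ) × ℝ => pert d q.2 i := by
    intro i
    unfold pert
    split_ifs
    · exact measurable_const
    · exact (measurable_snd.const_mul (-6)).div_const _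
    · exact (measurable_snd.const_mul 6).div_const _
  have hg : Measurable (fun q : (Fin (2*d+1) → ℝ) × ℝ => (q.1 + pert d q.2, q.2)) :=
    (measurable_pi_lambda _ fun i =>
      ((measurable_pi_apply i).comp measurable_fst).add (hpertm i)).prodMk measurable_snd
  have hgs : Measurable (fun q : (Fin (2*d+1) → ℝ) × ℝ => (swapMap d q.1, q.2)) :=
    ((measurable_swapMap d).comp measurable_fst).prodMk measurable_snd
  -- abbreviation
  set Q : ℝ → ℝ → ℝ → ℝ≥0∞ := fun s t v => pureLaw d s t {x | f x = v} with hQdef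
  have hQtop : ∀ s t v, Q s t v ≠ ⊤ := fun s t v => measure_ne_top _ _
  have hmapE : ∀ (μ : Measure (Fin (2*d+1) → ℝ)) (c : ℝ),
      μ.map (fun x => (x, c)) E = μ {x | f x = c} := by
    intro μ c
    rw [Measure.map_apply (hpair c) hE]
    rfl
  have hshiftdecomp : ∀ y : ℝ, (condLaw d p y).map (fun x => x + pert d y)
      = ENNReal.ofReal p • pureLaw d y (-y) + ENNReal.ofReal (1-p) • pureLaw d (-y) (-y) := by
    intro y
    rw [condLaw_eq_s16, Measure.map_add _ _ (hshiftm y), Measure.map_smul, Measure.map_smul,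
      pureLaw_map_shift, pureLaw_map_shift]
  have hswapdecomp : ∀ y : ℝ, (condLaw d p y).map (swapMap d)
      = ENNReal.ofReal p • pureLaw d y (-y) + ENNReal.ofReal (1-p) • pureLaw d (-y) (-y) := by
    intro y
    rw [condLaw_eq_s16, Measure.map_add _ _ (measurable_swapMap d), Measure.map_smul,
      Measure.map_smul, pureLaw_map_swap, pureLaw_map_swap]
  have happly : ∀ (s t c : ℝ),
      ((ENNReal.ofReal p • pureLaw d s t + ENNReal.ofReal (1-p) • pureLaw d (-s) t).map
        (fun x => (x, c))) E
      = ENNReal.ofReal p * Q s t c + ENNReal.ofReal (1-p) * Q (-s) t c := by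
    intro s t c
    rw [Measure.map_add _ _ (hpair c), Measure.map_smul, Measure.map_smul]
    simp only [Measure.add_apply, Measure.smul_apply, smul_eq_mul]
    rw [hmapE, hmapE]
  -- adversarial accuracy
  have hadvE : advLaw d p E
      = 2⁻¹ * (ENNReal.ofReal p * Q 1 (-1) 1 + ENNReal.ofReal (1-p) * Q (-1) (-1) 1)
      + 2⁻¹ * (ENNReal.ofReal p * Q (-1) 1 (-1) + ENNReal.ofReal (1-p) * Q 1 1 (-1)) := by
    unfold advLaw jointLaw
    rw [Measure.map_add _ _ hg, Measure.map_smul, Measure.map_smul,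
      Measure.map_map hg (hpair 1), Measure.map_map hg (hpair (-1))]
    have hc1 : (fun q : (Fin (2*d+1)→ℝ) × ℝ => (q.1 + pert d q.2, q.2)) ∘
        (fun x : Fin (2*d+1) → ℝ => (x, (1:ℝ)))
        = (fun x : Fin (2*d+1) → ℝ => (x, (1:ℝ))) ∘ (fun x => x + pert d 1) := rfl
    have hc2 : (fun q : (Fin (2*d+1)→ℝ) × ℝ => (q.1 + pert d q.2, q.2)) ∘
        (fun x : Fin (2*d+1) → ℝ => (x, (-1:ℝ)))
        = (fun x : Fin (2*d+1) → ℝ => (x, (-1:ℝ))) ∘ (fun x => x + pert d (-1)) := rfl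
    rw [hc1, hc2, ← Measure.map_map (hpair 1) (hshiftm 1),
      ← Measure.map_map (hpair (-1)) (hshiftm (-1)), hshiftdecomp 1, hshiftdecomp (-1)]
    simp only [Measure.add_apply, Measure.smul_apply, smul_eq_mul]
    rw [happly 1 (-1) 1, happly (-1) (- -1) (-1)]
    norm_num
  -- joint accuracy
  have hjointE : jointLaw d p E
      = 2⁻¹ * (ENNReal.ofReal p * Q 1 1 1 + ENNReal.ofReal (1-p) * Q (-1) 1 1)
      + 2⁻¹ * (ENNReal.ofReal p * Q (-1) (-1) (-1) + ENNReal.ofReal (1-p) * Q 1 (-1) (-1)) := by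
    unfold jointLaw
    simp only [Measure.add_apply, Measure.smul_apply, smul_eq_mul]
    rw [condLaw_eq_s16 d p 1, condLaw_eq_s16 d p (-1), happly 1 1 1, happly (-1) (-1) (-1)]
    norm_num
  -- swapped accuracy equals adversarial accuracy
  have hswapE : (jointLaw d p).map (fun q => (swapMap d q.1, q.2)) E = advLaw d p E := by
    rw [hadvE]
    unfold jointLaw
    rw [Measure.map_add _ _ hgs, Measure.map_smul, Measure.map_smul,
      Measure.map_map hgs (hpair 1), Measure.map_map hgs (hpair (-1))]
    have hc1 : (fun q : (Fin (2*d+1)→ℝ) × ℝ => (swapMap d q.1, q.2)) ∘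
        (fun x : Fin (2*d+1) → ℝ => (x, (1:ℝ)))
        = (fun x : Fin (2*d+1) → ℝ => (x, (1:ℝ))) ∘ swapMap d := rfl
    have hc2 : (fun q : (Fin (2*d+1)→ℝ) × ℝ => (swapMap d q.1, q.2)) ∘
        (fun x : Fin (2*d+1) → ℝ => (x, (-1:ℝ)))
        = (fun x : Fin (2*d+1) → ℝ => (x, (-1:ℝ))) ∘ swapMap d := rfl
    rw [hc1, hc2, ← Measure.map_map (hpair 1) (measurable_swapMap d),
      ← Measure.map_map (hpair (-1)) (measurable_swapMap d), hswapdecomp 1, hswapdecomp (-1)]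
    simp only [Measure.add_apply, Measure.smul_apply, smul_eq_mul]
    rw [happly 1 (-1) 1, happly (-1) (- -1) (-1)]
    norm_num
  -- sum to one
  have hone : ∀ s t : ℝ, Q s t 1 + Q s t (-1) = 1 := by
    intro s t
    have hu : {x : Fin (2*d+1) → ℝ | f x = 1} ∪ {x | f x = -1} = Set.univ := by
      ext x; simpa using hfval x
    have hdisj : Disjoint {x : Fin (2*d+1) → ℝ | f x = 1} {x | f x = -1} := by
      rw [Set.disjoint_left]
      intro x h1 h2
      simp only [Set.mem_setOf_eq] at h1 h2
      rw [h1] at h2; norm_num at h2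
    show pureLaw d s t _ + pureLaw d s t _ = 1
    rw [← measure_union hdisj (hmeasv (-1)), hu, measure_univ]
  have honeR : ∀ s t : ℝ, (Q s t (-1)).toReal = 1 - (Q s t 1).toReal := by
    intro s t
    have h := congrArg ENNReal.toReal (hone s t)
    rw [ENNReal.toReal_add (hQtop s t 1) (hQtop s t (-1)), ENNReal.toReal_one] at h
    linarith
  -- real variables
  set a := (Q 1 1 1).toReal with ha
  set b := (Q (-1) 1 1).toReal with hb
  set c := (Q 1 (-1) 1).toReal with hc
  set e := (Q (-1) (-1) 1).toReal with he
  have hrange : ∀ s t : ℝ, 0 ≤ (Q s t 1).toReal ∧ (Q s t 1).toReal ≤ 1 := by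
    intro s t
    refine ⟨ENNReal.toReal_nonneg, ?_⟩
    have := honeR s t
    have h2 : 0 ≤ (Q s t (-1)).toReal := ENNReal.toReal_nonneg
    linarith
  -- toReal of the combination
  have hcomb : ∀ x y z w : ℝ≥0∞, x ≠ ⊤ → y ≠ ⊤ → z ≠ ⊤ → w ≠ ⊤ →
      ((2⁻¹:ℝ≥0∞) * (ENNReal.ofReal p * x + ENNReal.ofReal (1-p) * y)
        + 2⁻¹ * (ENNReal.ofReal p * z + ENNReal.ofReal (1-p) * w)).toReal
      = (p * x.toReal + (1-p) * y.toReal) / 2 + (p * z.toReal + (1-p) * w.toReal) / 2 := by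
    intro x y z w hx hy hz hw
    have hxy : ENNReal.ofReal p * x + ENNReal.ofReal (1-p) * y ≠ ⊤ :=
      ENNReal.add_ne_top.2 ⟨ENNReal.mul_ne_top ENNReal.ofReal_ne_top hx,
        ENNReal.mul_ne_top ENNReal.ofReal_ne_top hy⟩
    have hzw : ENNReal.ofReal p * z + ENNReal.ofReal (1-p) * w ≠ ⊤ :=
      ENNReal.add_ne_top.2 ⟨ENNReal.mul_ne_top ENNReal.ofReal_ne_top hz,
        ENNReal.mul_ne_top ENNReal.ofReal_ne_top hw⟩
    have h2 : ((2:ℝ≥0∞)⁻¹) ≠ ⊤ := by simp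
    rw [ENNReal.toReal_add (ENNReal.mul_ne_top h2 hxy) (ENNReal.mul_ne_top h2 hzw),
      ENNReal.toReal_mul, ENNReal.toReal_mul,
      ENNReal.toReal_add (ENNReal.mul_ne_top ENNReal.ofReal_ne_top hx)
        (ENNReal.mul_ne_top ENNReal.ofReal_ne_top hy),
      ENNReal.toReal_add (ENNReal.mul_ne_top ENNReal.ofReal_ne_top hz)
        (ENNReal.mul_ne_top ENNReal.ofReal_ne_top hw),
      ENNReal.toReal_mul, ENNReal.toReal_mul, ENNReal.toReal_mul, ENNReal.toReal_mul,
      ENNReal.toReal_ofReal hp0', ENNReal.toReal_ofReal hp1']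
    norm_num
    ring
  have hAR : (advLaw d p E).toReal
      = (p * c + (1-p) * e) / 2 + (p * (1 - b) + (1-p) * (1 - a)) / 2 := by
    rw [hadvE, hcomb _ _ _ _ (hQtop 1 (-1) 1) (hQtop (-1) (-1) 1) (hQtop (-1) 1 (-1))
      (hQtop 1 1 (-1)), honeR (-1) 1, honeR 1 1]
  have hJR : (jointLaw d p E).toReal
      = (p * a + (1-p) * b) / 2 + (p * (1 - e) + (1-p) * (1 - c)) / 2 := by
    rw [hjointE, hcomb _ _ _ _ (hQtop 1 1 1) (hQtop (-1) 1 1) (hQtop (-1) (-1) (-1))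
      (hQtop 1 (-1) (-1)), honeR (-1) (-1), honeR 1 (-1)]
  -- rLaw value
  have hadvtop : advLaw d p E ≠ ⊤ := by
    rw [hadvE]
    exact ENNReal.add_ne_top.2 ⟨ENNReal.mul_ne_top (by simp) (ENNReal.add_ne_top.2
      ⟨ENNReal.mul_ne_top ENNReal.ofReal_ne_top (hQtop _ _ _),
        ENNReal.mul_ne_top ENNReal.ofReal_ne_top (hQtop _ _ _)⟩),
      ENNReal.mul_ne_top (by simp) (ENNReal.add_ne_top.2
      ⟨ENNReal.mul_ne_top ENNReal.ofReal_ne_top (hQtop _ _ _),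
        ENNReal.mul_ne_top ENNReal.ofReal_ne_top (hQtop _ _ _)⟩)⟩
  have hjointtop : jointLaw d p E ≠ ⊤ := by
    rw [hjointE]
    exact ENNReal.add_ne_top.2 ⟨ENNReal.mul_ne_top (by simp) (ENNReal.add_ne_top.2
      ⟨ENNReal.mul_ne_top ENNReal.ofReal_ne_top (hQtop _ _ _),
        ENNReal.mul_ne_top ENNReal.ofReal_ne_top (hQtop _ _ _)⟩),
      ENNReal.mul_ne_top (by simp) (ENNReal.add_ne_top.2
      ⟨ENNReal.mul_ne_top ENNReal.ofReal_ne_top (hQtop _ _ _),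
        ENNReal.mul_ne_top ENNReal.ofReal_ne_top (hQtop _ _ _)⟩)⟩
  have hRR : (rLaw d p E).toReal = (jointLaw d p E).toReal / 2 + (advLaw d p E).toReal / 2 := by
    unfold rLaw
    simp only [Measure.add_apply, Measure.smul_apply, smul_eq_mul]
    rw [hswapE, ENNReal.toReal_add (ENNReal.mul_ne_top (by simp) hjointtop)
      (ENNReal.mul_ne_top (by simp) hadvtop), ENNReal.toReal_mul, ENNReal.toReal_mul]
    norm_num
    ring
  -- arithmetic finish
  obtain ⟨ha0, ha1⟩ := hrange 1 1
  obtain ⟨hb0, hb1⟩ := hrange (-1) 1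
  obtain ⟨hc0, hc1⟩ := hrange 1 (-1)
  obtain ⟨he0, he1⟩ := hrange (-1) (-1)
  rw [hAR] at hadv
  set AR := (p * c + (1-p) * e) / 2 + (p * (1 - b) + (1-p) * (1 - a)) / 2 with hARdef
  set JR := (p * a + (1-p) * b) / 2 + (p * (1 - e) + (1-p) * (1 - c)) / 2 with hJRdef
  have hkey : (1-p) * JR + p * AR ≤ p := by
    rw [hARdef, hJRdef]
    nlinarith [mul_nonneg (by linarith : (0:ℝ) ≤ 2*p - 1) hb0,
      mul_nonneg (by linarith : (0:ℝ) ≤ 2*p - 1) (by linarith : (0:ℝ) ≤ 1 - c)]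
  have hbound : p / (2*(1-p)) - ((2*p-1)/(2*(1-p))) * (1-δ)
      = (p - (2*p-1)*(1-δ)) / (2*(1-p)) := by ring
  have hmain : (rLaw d p E).toReal ≤ p / (2*(1-p)) - ((2*p-1)/(2*(1-p))) * (1-δ) := by
    rw [hRR, hJR, hAR, hbound, le_div_iff₀ (by linarith : (0:ℝ) < 2*(1-p))]
    have hprod : (2*p-1) * (1-δ) ≤ (2*p-1) * AR :=
      mul_le_mul_of_nonneg_left hadv (by linarith)
    have h2 : (JR/2 + AR/2) * (2*(1-p)) = ((1-p)*JR + p*AR) - (2*p-1)*AR := by ring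
    rw [h2]
    linarith [hkey, hprod]
  refine ⟨hmain, lt_of_le_of_lt hmain ?_⟩
  rw [hbound, div_lt_iff₀ (by linarith : (0:ℝ) < 2*(1-p))]
  nlinarith
end
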